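/- arXiv:1810.03393 — 2 statements merged into one kernel-verified Lean document; each statement's English description precedes it below -/
import Mathlib

section
/- Suppose D is partitioned into clusters C_1, …, C_k such that within each cluster any two points are density connected, no point of C_i is density connected to any point of C_j for i ≠ j, each cluster has a unique mode m_i (the unique density maximiser of C_i), and for every non-mode x ∈ C_i the nearest density-connected higher-density neighbour η′_x exists and lies in C_i. Then every C_i is an η-density-connected cluster: C_i = { x ∈ D | Connect_ε^τ(x, m_i) ∧ ∀ j ≠ i, LDCpath(x, m_j) > LDCpath(x, m_i) }. -/
/-- Density-connectivity (Definition 6): `x` and `y` are density connected if there is a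
sequence of `p ≥ 2` distinct points of `D` starting at `x` and ending at `y`, with
consecutive distances at most `ε`, all interior points having density at least `τ`,
and, in the case `p = 2`, at least one endpoint having density at least `τ`.
(Here the sequence has `p + 2` points, so `p ≥ 2` automatically.) -/
def Connect {α : Type*} [MetricSpace α] (D : Finset α) (ρ : α → ℝ) (ε τ : ℝ)
    (x y : α) : Prop :=
  ∃ p : ℕ, ∃ z : Fin (p + 2) → α,
    Function.Injective z ∧ (∀ i, z i ∈ D) ∧
    z 0 = x ∧ z (Fin.last (p + 1)) = y ∧
    (∀ i : Fin (p + 1), dist (z i.castSucc) (z i.succ) ≤ ε) ∧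
    (∀ i : Fin (p + 2), 0 < (i : ℕ) → (i : ℕ) < p + 1 → τ ≤ ρ (z i)) ∧
    (p = 0 → τ ≤ ρ x ∨ τ ≤ ρ y)

open Classical in
/-- `Lpath η x y` is the number of points on the η-linked path from `x` to `y`
(the η-orbit of `x` up to the first time it reaches `y`), or `∞` if the orbit never
reaches `y`.  In particular `Lpath η x x = 1`. -/
noncomputable def Lpath {α : Type*} (η : α → α) (x y : α) : ℕ∞ :=
  if h : ∃ i : ℕ, η^[i] x = y then ((Nat.find h : ℕ∞) + 1) else ⊤

/-- Lemma 6: if `D` is partitioned into clusters that are internally density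
connected, mutually non-density-connected, each with a unique mode, and each
closed under the nearest density-connected higher-density neighbour map `η'`
(which for a non-mode point lies in the same cluster, has strictly higher density,
is density connected to it, and is nearest among such points), then every cluster
is an η-density-connected cluster. -/
theorem partition_of_density_connected_clusters_is_dc_clusters
    {α : Type*} [MetricSpace α] (D : Finset α) (ρ : α → ℝ) (ε τ : ℝ)
    (η' : α → α) {k : ℕ} (C : Fin k → Finset α) (m : Fin k → α)
    (hcover : ∀ x ∈ D, ∃ i, x ∈ C i)
    (hsub : ∀ i, C i ⊆ D)
    (hdisj : ∀ i j, i ≠ j → ∀ x ∈ C i, x ∉ C j)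
    (hwithin : ∀ i, ∀ x ∈ C i, ∀ y ∈ C i, x ≠ y → Connect D ρ ε τ x y)
    (hacross : ∀ i j, i ≠ j → ∀ x ∈ C i, ∀ y ∈ C j, ¬ Connect D ρ ε τ x y)
    (hmode : ∀ i, m i ∈ C i ∧ ∀ x ∈ C i, x ≠ m i → ρ x < ρ (m i))
    (hη' : ∀ i, ∀ x ∈ C i, x ≠ m i →
      η' x ∈ C i ∧ ρ x < ρ (η' x) ∧ Connect D ρ ε τ x (η' x) ∧
      ∀ y ∈ D, ρ x < ρ y → Connect D ρ ε τ x y → dist x (η' x) ≤ dist x y) :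
    ∀ i, (C i : Set α) =
      {x | x ∈ D ∧ (x = m i ∨ Connect D ρ ε τ x (m i)) ∧
        ∀ j, j ≠ i → Lpath η' x (m i) < Lpath η' x (m j)} := by
  classical
  -- key: the η'-orbit of any point of `C i` reaches `m i` while staying in `C i`
  have key : ∀ i, ∀ x ∈ C i, ∃ N, (∀ n ≤ N, η'^[n] x ∈ C i) ∧ η'^[N] x = m i := by
    intro i
    have main : ∀ c : ℕ, ∀ x ∈ C i, ((C i).filter (fun y => ρ x < ρ y)).card ≤ c →
        ∃ N, (∀ n ≤ N, η'^[n] x ∈ C i) ∧ η'^[N] x = m i := by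
      intro c
      induction c with
      | zero =>
        intro x hx hcard
        by_cases hxm : x = m i
        · exact ⟨0, fun n hn => by interval_cases n; simpa using hx, by simpa using hxm⟩
        · exfalso
          have hmem : m i ∈ (C i).filter (fun y => ρ x < ρ y) := by
            simp only [Finset.mem_filter]
            exact ⟨(hmode i).1, (hmode i).2 x hx hxm⟩
          have := Finset.card_pos.mpr ⟨m i, hmem⟩
          omega
      | succ c ih =>
        intro x hx hcard
        by_cases hxm : x = m i
        · exact ⟨0, fun n hn => by interval_cases n; simpa using hx, by simpa using hxm⟩
        · obtain ⟨hη1, hη2, _, _⟩ := hη' i x hx hxm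
          have hsubset : (C i).filter (fun y => ρ (η' x) < ρ y) ⊂
              (C i).filter (fun y => ρ x < ρ y) := by
            constructor
            · intro y hy
              simp only [Finset.mem_filter] at hy ⊢
              exact ⟨hy.1, lt_trans hη2 hy.2⟩
            · intro hss
              have : η' x ∈ (C i).filter (fun y => ρ (η' x) < ρ y) :=
                hss (by simp only [Finset.mem_filter]; exact ⟨hη1, hη2⟩)
              simp only [Finset.mem_filter] at this
              exact lt_irrefl _ this.2
          have hlt := Finset.card_lt_card hsubset
          obtain ⟨N, hN, hNm⟩ := ih (η' x) hη1 (by omega)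
          refine ⟨N + 1, ?_, by rw [Function.iterate_succ_apply]; exact hNm⟩
          intro n hn
          cases n with
          | zero => simpa using hx
          | succ n =>
            rw [Function.iterate_succ_apply]
            exact hN n (by omega)
    intro x hx
    exact main _ x hx le_rfl
  intro i
  ext x
  simp only [Finset.coe_sort_coe, Set.mem_setOf_eq, Finset.mem_coe]
  constructor
  · intro hx
    obtain ⟨N, hN, hNm⟩ := key i x hx
    refine ⟨hsub i hx, ?_, ?_⟩
    · by_cases hxm : x = m i
      · exact Or.inl hxm
      · exact Or.inr (hwithin i x hx (m i) (hmode i).1 hxm)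
    · intro j hj
      have hex : ∃ n : ℕ, η'^[n] x = m i := ⟨N, hNm⟩
      have hmj : m j ∉ C i := hdisj j i hj (m j) (hmode j).1
      have hfind_le : Nat.find hex ≤ N := Nat.find_le hNm
      rw [Lpath, dif_pos hex]
      by_cases hex2 : ∃ n : ℕ, η'^[n] x = m j
      · rw [Lpath, dif_pos hex2]
        have hgt : Nat.find hex < Nat.find hex2 := by
          by_contra hle
          push_neg at hle
          have := hN (Nat.find hex2) (le_trans hle hfind_le)
          rw [Nat.find_spec hex2] at this
          exact hmj this
        have h1 : Nat.find hex + 1 < Nat.find hex2 + 1 := by omega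
        exact_mod_cast h1
      · rw [Lpath, dif_neg hex2]
        exact lt_top_iff_ne_top.mpr (by exact_mod_cast ENat.coe_ne_top (Nat.find hex + 1))
  · rintro ⟨hxD, hconn, _⟩
    obtain ⟨j, hxj⟩ := hcover x hxD
    by_cases hji : j = i
    · exact hji ▸ hxj
    · exfalso
      rcases hconn with hxm | hconn
      · exact hdisj i j (fun h => hji h.symm) (m i) (hmode i).1 (hxm ▸ hxj)
      · exact hacross j i hji x hxj (m i) (hmode i).1 hconn
end

section
/- If x and y belong to different clusters of a partition in which no point of one cluster is density connected (Connect_ε^τ) to any point of another, then LDCpath(x, y) = ∞, i.e. there is no η-density-connected path from x to y. -/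
/-- If `x` and `y` lie in different clusters of a partition of `D` in which no point of
one cluster is density connected to any point of another, then there is no
η-density-connected path from `x` to `y`: `LDCpath(x, y) = ∞`.  (Each step of the
`η'`-orbit either stays put or moves to a point of `D` density connected to the
current point, hence never leaves the current cluster.) -/
theorem ldcpath_infinite_across_clusters
    {α : Type*} [MetricSpace α] (D : Finset α) (ρ : α → ℝ) (ε τ : ℝ)
    (η' : α → α) {k : ℕ} (C : Fin k → Finset α)
    (hcover : ∀ x ∈ D, ∃ i, x ∈ C i)
    (hsub : ∀ i, C i ⊆ D)
    (hdisj : ∀ i j, i ≠ j → ∀ x ∈ C i, x ∉ C j)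
    (hacross : ∀ i j, i ≠ j → ∀ x ∈ C i, ∀ y ∈ C j, ¬ Connect D ρ ε τ x y)
    (hη' : ∀ z ∈ D, η' z = z ∨ (η' z ∈ D ∧ Connect D ρ ε τ z (η' z)))
    (i j : Fin k) (hij : i ≠ j) (x : α) (hx : x ∈ C i) (y : α) (hy : y ∈ C j) :
    Lpath η' x y = ⊤ := by
  have horbit : ∀ n : ℕ, η'^[n] x ∈ C i := by
    intro n
    induction n with
    | zero => simpa using hx
    | succ n ih =>
      rw [Function.iterate_succ_apply']
      set z := η'^[n] x with hz
      have hzD : z ∈ D := hsub i ih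
      rcases hη' z hzD with h | ⟨hmem, hconn⟩
      · rwa [h]
      · obtain ⟨i', hi'⟩ := hcover _ hmem
        by_cases hii : i' = i
        · rwa [hii] at hi'
        · exact absurd hconn (hacross i i' (Ne.symm hii) z ih _ hi')
  unfold Lpath
  rw [dif_neg]
  rintro ⟨n, hn⟩
  exact hdisj i j hij _ (hn ▸ horbit n) hy
end
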